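/- arXiv:2305.13922 — 2 statements merged into one kernel-verified Lean document; each statement's English description precedes it below -/
import Mathlib

section
/- Let C, N₀, τ > 0 with 16·C·τ·N₀ < 1, and let E : [0,τ] → ℝ be continuous and nonnegative with E(0) ≤ N₀ and E(t) ≤ N₀ + 4C·t·E(t)² for all t ∈ [0,τ]. If moreover τ ≤ 1/(32·C·N₀), then E(t) < 4N₀ for all t ∈ [0,τ]. -/
/-- Continuity/bootstrap argument: if `E ≥ 0` is continuous on `[0,τ]`, `E(0) ≤ N₀`,
`E(t) ≤ N₀ + 4Ct·E(t)²` on `[0,τ]`, `16CτN₀ < 1` and `τ ≤ 1/(32CN₀)`, then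
`E(t) < 4N₀` on `[0,τ]`. -/
theorem bootstrap_energy_bound (C N₀ τ : ℝ) (hC : 0 < C) (hN : 0 < N₀) (hτ : 0 < τ)
    (hsmall : 16 * C * τ * N₀ < 1) (hτ2 : τ ≤ 1 / (32 * C * N₀))
    (E : ℝ → ℝ) (hcont : ContinuousOn E (Set.Icc 0 τ))
    (hnn : ∀ t ∈ Set.Icc 0 τ, 0 ≤ E t) (h0 : E 0 ≤ N₀)
    (hineq : ∀ t ∈ Set.Icc 0 τ, E t ≤ N₀ + 4 * C * t * (E t) ^ 2) :
    ∀ t ∈ Set.Icc 0 τ, E t < 4 * N₀ := by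
  by_contra h
  push_neg at h
  obtain ⟨t₀, ht₀, hE⟩ := h
  have hsub : Set.Icc (0:ℝ) t₀ ⊆ Set.Icc 0 τ := Set.Icc_subset_Icc le_rfl ht₀.2
  have hmem : (4*N₀) ∈ Set.Icc (E 0) (E t₀) := ⟨by linarith, hE⟩
  obtain ⟨s, hs, hEs⟩ := intermediate_value_Icc ht₀.1 (hcont.mono hsub) hmem
  have hsτ : s ∈ Set.Icc 0 τ := hsub hs
  have h1 := hineq s hsτ
  rw [hEs] at h1
  have hCN : (0:ℝ) < 32*C*N₀ := by positivity
  have hs2 : s ≤ 1/(32*C*N₀) := le_trans (hs.2.trans ht₀.2) hτ2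
  have hmul : s*(32*C*N₀) ≤ 1 := (le_div_iff₀ hCN).mp hs2
  nlinarith [hs.1, hN.le]
end

section
/- Let C > 0, T > 0, β ∈ L¹([0,T]) nonnegative, and let y : [0,T] → [0,∞) be differentiable satisfying y′(t) ≤ C(1 + β(t)[1 + log(1 + y(t))])·y(t). Then for all t ∈ [0,T], 1 + y(t) ≤ [(1 + y(0))·exp(1 + C·t)]^{exp(C·∫₀ᵗ β(s) ds)}. -/
open MeasureTheory

open Set in
private lemma key_identity (b : ℝ → ℝ) (hb : Measurable b) (hbnn : ∀ x, 0 ≤ b x)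
    (hbint : Integrable b) (k : ℕ) (t : ℝ) :
    ∫ s in Ioc 0 t, b s * (∫ u in Ioc 0 s, b u) ^ k
      = (∫ s in Ioc 0 t, b s) ^ (k + 1) / (k + 1) := by
  set B : ℝ → ℝ := fun x => ∫ u in Ioc 0 x, b u with hB
  have Bnn : ∀ x, 0 ≤ B x := fun x => setIntegral_nonneg measurableSet_Ioc fun u _ => hbnn u
  have Bmono : Monotone B := by
    intro s s' h
    exact setIntegral_mono_set hbint.integrableOn (Filter.Eventually.of_forall fun u => hbnn u)
      (HasSubset.Subset.eventuallyLE (Ioc_subset_Ioc_right h))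
  have Bmeas : Measurable B := Bmono.measurable
  have fint : ∀ (m : ℕ) (x : ℝ), IntegrableOn (fun s => b s * B s ^ m) (Ioc 0 x) := by
    intro m x
    refine Integrable.mono' ((hbint.const_mul (B x ^ m)).integrableOn)
      ((hb.mul (Bmeas.pow_const m)).aestronglyMeasurable) ?_
    filter_upwards [ae_restrict_mem measurableSet_Ioc] with s hs
    rw [Real.norm_eq_abs, abs_of_nonneg (mul_nonneg (hbnn s) (pow_nonneg (Bnn s) m))]
    calc b s * B s ^ m ≤ b s * B x ^ m :=
          mul_le_mul_of_nonneg_left (pow_le_pow_left₀ (Bnn s) (Bmono hs.2) m) (hbnn s)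
      _ = B x ^ m * b s := mul_comm _ _
  induction k generalizing t with
  | zero => simp [hB]
  | succ k ih =>
    rcases le_or_gt t 0 with ht | ht
    · rw [Ioc_eq_empty (by exact not_lt.mpr ht)]
      simp
    set f : ℝ → ℝ := fun s => b s * B s ^ k with hf
    set J : ℝ → ℝ := fun x => ∫ s in Ioc 0 x, f s with hJ
    have hJval : ∀ x, J x = B x ^ (k + 1) / (k + 1) := fun x => ih x
    set F : ℝ → ℝ → ℝ := fun s u => if u ≤ s then f s * b u else 0 with hF
    have Fmeas : Measurable (Function.uncurry F) := by
      have : Function.uncurry F = fun p : ℝ × ℝ =>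
          Set.indicator {p : ℝ × ℝ | p.2 ≤ p.1} (fun p => f p.1 * b p.2) p := by
        ext p
        by_cases h : p.2 ≤ p.1 <;> simp [Function.uncurry, hF, h, Set.indicator]
      rw [this]
      exact (((hb.mul (Bmeas.pow_const k)).comp measurable_fst).mul
        (hb.comp measurable_snd)).indicator (measurableSet_le measurable_snd measurable_fst)
    have Fint : Integrable (Function.uncurry F)
        ((volume.restrict (Ioc 0 t)).prod (volume.restrict (Ioc 0 t))) := by
      refine Integrable.mono' (((fint k t).abs.mul_prod hbint.integrableOn))
        Fmeas.aestronglyMeasurable ?_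
      refine Filter.Eventually.of_forall fun p => ?_
      by_cases h : p.2 ≤ p.1
      · simp only [Function.uncurry, hF, if_pos h]
        rw [Real.norm_eq_abs, abs_mul, abs_of_nonneg (hbnn p.2)]
      · simp only [Function.uncurry, hF, if_neg h]
        simpa using mul_nonneg (abs_nonneg (b p.1 * B p.1 ^ k)) (hbnn p.2)
    have step1 : ∫ s in Ioc 0 t, b s * B s ^ (k + 1)
        = ∫ s in Ioc 0 t, ∫ u in Ioc 0 t, F s u := by
      refine setIntegral_congr_fun measurableSet_Ioc fun s hs => ?_
      have h1 : ∫ u in Ioc 0 t, F s u = f s * ∫ u in Ioc 0 t, Set.indicator (Iic s) b u := by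
        rw [← integral_const_mul]
        refine setIntegral_congr_fun measurableSet_Ioc fun u _ => ?_
        by_cases h : u ≤ s <;> simp [hF, Set.indicator, h]
      rw [h1, integral_indicator measurableSet_Iic, Measure.restrict_restrict measurableSet_Iic]
      have h2 : Iic s ∩ Ioc 0 t = Ioc 0 s := by
        ext u
        constructor
        · rintro ⟨h1, h2, h3⟩; exact ⟨h2, h1⟩
        · rintro ⟨h1, h2⟩; exact ⟨h2, h1, h2.trans hs.2⟩
      rw [h2, hf]
      ring
    have step2 : ∫ s in Ioc 0 t, ∫ u in Ioc 0 t, F s u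
        = ∫ u in Ioc 0 t, ∫ s in Ioc 0 t, F s u := integral_integral_swap Fint
    have step3 : ∫ u in Ioc 0 t, ∫ s in Ioc 0 t, F s u
        = ∫ u in Ioc 0 t, (J t - J u) * b u := by
      refine setIntegral_congr_fun measurableSet_Ioc fun u hu => ?_
      have h1 : ∫ s in Ioc 0 t, F s u = (∫ s in Ioc 0 t, Set.indicator (Ici u) f s) * b u := by
        rw [← integral_mul_const]
        refine setIntegral_congr_fun measurableSet_Ioc fun s _ => ?_
        by_cases h : u ≤ s <;> simp [hF, Set.indicator, h]
      rw [h1, integral_indicator measurableSet_Ici, Measure.restrict_restrict measurableSet_Ici]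
      have h2 : Ici u ∩ Ioc 0 t = Icc u t := by
        ext s
        constructor
        · rintro ⟨h1, _, h3⟩; exact ⟨h1, h3⟩
        · rintro ⟨h1, h2⟩; exact ⟨h1, hu.1.trans_le h1, h2⟩
      rw [h2, integral_Icc_eq_integral_Ioc]
      have h3 : J t = J u + ∫ s in Ioc u t, f s := by
        show (∫ s in Ioc 0 t, f s) = (∫ s in Ioc 0 u, f s) + ∫ s in Ioc u t, f s
        rw [← Set.Ioc_union_Ioc_eq_Ioc hu.1.le hu.2, setIntegral_union
          (Set.Ioc_disjoint_Ioc_of_le le_rfl) measurableSet_Ioc ((fint k t).mono_set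
            (Ioc_subset_Ioc_right hu.2)) ((fint k t).mono_set (Ioc_subset_Ioc_left hu.1.le))]
      rw [h3]; ring
    have lin : ∫ u in Ioc 0 t, (J t - J u) * b u
        = J t * B t - (1 / (k + 1 : ℝ)) * ∫ u in Ioc 0 t, b u * B u ^ (k + 1) := by
      have e1 : ∀ u, (J t - J u) * b u
          = J t * b u - (1 / (k + 1 : ℝ)) * (b u * B u ^ (k + 1)) := by
        intro u
        rw [hJval u]
        field_simp
      simp_rw [e1]
      rw [integral_sub (hbint.integrableOn.const_mul _) ((fint (k+1) t).const_mul _),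
        integral_const_mul, integral_const_mul]
    have main : ∫ s in Ioc 0 t, b s * B s ^ (k + 1)
        = J t * B t - (1 / (k + 1 : ℝ)) * ∫ u in Ioc 0 t, b u * B u ^ (k + 1) :=
      ((step1.trans step2).trans step3).trans lin
    rw [hJval t] at main
    have h1 : ((k : ℝ) + 1) ≠ 0 := by positivity
    field_simp at main
    have hX : (∫ s in Ioc 0 t, b s * B s ^ (k + 1)) * ((k : ℝ) + 2) = B t ^ (k + 2) := by
      linear_combination main
    push_cast
    show (∫ s in Ioc 0 t, b s * B s ^ (k + 1)) = B t ^ (k + 1 + 1) / ((k : ℝ) + 1 + 1)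
    have h2 : ((k : ℝ) + 1 + 1) ≠ 0 := by positivity
    rw [eq_div_iff h2]
    rw [show k + 1 + 1 = k + 2 from rfl]
    linear_combination hX


/-- Logarithmic Grönwall lemma: if `y ≥ 0` is differentiable on `[0,T]` with
`y' ≤ C(1 + β(t)[1 + log(1+y)])·y` for a nonnegative `β ∈ L¹([0,T])`, then
`1 + y(t) ≤ [(1+y(0))·exp(1+Ct)]^{exp(C∫₀ᵗ β)}`. -/
theorem log_gronwall (C T : ℝ) (hC : 0 < C) (hT : 0 < T) (β : ℝ → ℝ)
    (hβnn : ∀ t ∈ Set.Icc 0 T, 0 ≤ β t)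
    (hβint : IntegrableOn β (Set.Icc 0 T))
    (y y' : ℝ → ℝ)
    (hynn : ∀ t ∈ Set.Icc 0 T, 0 ≤ y t)
    (hd : ∀ t ∈ Set.Icc 0 T, HasDerivAt y (y' t) t)
    (hineq : ∀ t ∈ Set.Icc 0 T,
      y' t ≤ C * (1 + β t * (1 + Real.log (1 + y t))) * y t) :
    ∀ t ∈ Set.Icc 0 T,
      1 + y t ≤ ((1 + y 0) * Real.exp (1 + C * t)) ^
        Real.exp (C * ∫ s in (0 : ℝ)..t, β s) := by
  open Set in
  classical
  -- measurable nonneg representative of β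
  set β₀ : ℝ → ℝ := hβint.1.mk β with hβ₀
  have hβ₀meas : StronglyMeasurable β₀ := hβint.1.stronglyMeasurable_mk
  set b : ℝ → ℝ := Set.indicator (Set.Icc 0 T) (fun x => max (β₀ x) 0) with hb
  have hbmeas : Measurable b :=
    (hβ₀meas.measurable.max measurable_const).indicator measurableSet_Icc
  have hbnn : ∀ x, 0 ≤ b x := fun x =>
    Set.indicator_nonneg (fun x _ => le_max_right _ _) x
  have hbae' : (fun x => max (β₀ x) 0) =ᵐ[volume.restrict (Icc 0 T)] β := by
    filter_upwards [hβint.1.ae_eq_mk, ae_restrict_mem measurableSet_Icc] with x hx hmem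
    rw [hβ₀, ← hx, max_eq_left (hβnn x hmem)]
  have hbae : b =ᵐ[volume.restrict (Icc 0 T)] β :=
    (indicator_ae_eq_restrict measurableSet_Icc).trans hbae'
  have hbint : Integrable b :=
    (integrable_indicator_iff measurableSet_Icc).2 (hβint.congr hbae'.symm)
  -- primitive of b
  set B : ℝ → ℝ := fun x => ∫ u in Ioc 0 x, b u with hB
  have Bnn : ∀ x, 0 ≤ B x := fun x => setIntegral_nonneg measurableSet_Ioc fun u _ => hbnn u
  have Bmono : Monotone B := by
    intro s s' h
    exact setIntegral_mono_set hbint.integrableOn (Filter.Eventually.of_forall fun u => hbnn u)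
      (HasSubset.Subset.eventuallyLE (Ioc_subset_Ioc_right h))
  have Bmeas : Measurable B := Bmono.measurable
  have fint : ∀ (m : ℕ) (x : ℝ), IntegrableOn (fun s => b s * B s ^ m) (Ioc 0 x) := by
    intro m x
    refine Integrable.mono' ((hbint.const_mul (B x ^ m)).integrableOn)
      ((hbmeas.mul (Bmeas.pow_const m)).aestronglyMeasurable) ?_
    filter_upwards [ae_restrict_mem measurableSet_Ioc] with s hs
    rw [Real.norm_eq_abs, abs_of_nonneg (mul_nonneg (hbnn s) (pow_nonneg (Bnn s) m))]
    calc b s * B s ^ m ≤ b s * B x ^ m :=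
          mul_le_mul_of_nonneg_left (pow_le_pow_left₀ (Bnn s) (Bmono hs.2) m) (hbnn s)
      _ = B x ^ m * b s := mul_comm _ _
  have hBeq : ∀ t ∈ Icc (0:ℝ) T, (∫ s in (0:ℝ)..t, β s) = B t := by
    intro t ht
    rw [intervalIntegral.integral_of_le ht.1, hB]
    refine integral_congr_ae ?_
    exact ae_restrict_of_ae_restrict_of_subset
      ((Ioc_subset_Ioc_right ht.2).trans Ioc_subset_Icc_self) hbae.symm
  -- the function w
  have hy1 : ∀ s ∈ Icc (0:ℝ) T, (0:ℝ) < 1 + y s := fun s hs => by linarith [hynn s hs]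
  set w : ℝ → ℝ := fun s => 1 + Real.log (1 + y s) with hw
  have hycont : ContinuousOn y (Icc 0 T) := fun s hs => (hd s hs).continuousAt.continuousWithinAt
  have hwcont : ContinuousOn w (Icc 0 T) := by
    refine continuousOn_const.add (ContinuousOn.log (continuousOn_const.add hycont) ?_)
    exact fun s hs => (hy1 s hs).ne'
  have hw1 : ∀ s ∈ Icc (0:ℝ) T, (1:ℝ) ≤ w s := by
    intro s hs
    have := Real.log_nonneg (by linarith [hynn s hs] : (1:ℝ) ≤ 1 + y s)
    simp only [hw]; linarith
  obtain ⟨M, hM⟩ := isCompact_Icc.exists_bound_of_continuousOn hwcont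
  have hM0 : 0 ≤ M := le_trans (norm_nonneg _) (hM 0 ⟨le_refl 0, hT.le⟩)
  have hMw : ∀ s ∈ Icc (0:ℝ) T, w s ≤ M := fun s hs =>
    le_trans (le_abs_self _) (hM s hs)
  -- integrability of b * w
  have hbwint : ∀ t ∈ Icc (0:ℝ) T, IntegrableOn (fun s => b s * w s) (Ioc 0 t) := by
    intro t ht
    have hsub : Ioc (0:ℝ) t ⊆ Icc 0 T := (Ioc_subset_Ioc_right ht.2).trans Ioc_subset_Icc_self
    refine Integrable.mono' ((hbint.const_mul M).integrableOn)
      (hbmeas.aestronglyMeasurable.mul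
        ((hwcont.mono hsub).aestronglyMeasurable measurableSet_Ioc)) ?_
    filter_upwards [ae_restrict_mem measurableSet_Ioc] with s hs
    rw [Real.norm_eq_abs, abs_mul, abs_of_nonneg (hbnn s)]
    calc b s * |w s| ≤ b s * M := mul_le_mul_of_nonneg_left
          (le_trans (abs_le_abs (hMw s (hsub hs)) (by linarith [hw1 s (hsub hs)]))
            (le_of_eq (abs_of_nonneg hM0))) (hbnn s)
      _ = M * b s := mul_comm _ _
  -- step C: integral inequality
  have hstepC : ∀ t ∈ Icc (0:ℝ) T,
      w t ≤ (w 0 + C * t) + C * ∫ s in Ioc 0 t, b s * w s := by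
    intro t ht
    have hsub : Icc (0:ℝ) t ⊆ Icc 0 T := Icc_subset_Icc le_rfl ht.2
    have hsub' : Ioc (0:ℝ) t ⊆ Icc 0 T := (Ioc_subset_Ioc_right ht.2).trans Ioc_subset_Icc_self
    have hβint' : IntegrableOn β (Icc 0 t) := hβint.mono_set hsub
    have hβwint : IntegrableOn (fun s => C * (β s * w s)) (Icc 0 t) := by
      refine Integrable.const_mul ?_ C
      refine Integrable.mono' ((hβint'.abs.const_mul M))
        (hβint'.1.mul ((hwcont.mono hsub).aestronglyMeasurable measurableSet_Icc)) ?_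
      filter_upwards [ae_restrict_mem measurableSet_Icc] with s hs
      rw [Real.norm_eq_abs, abs_mul]
      calc |β s| * |w s| ≤ |β s| * M := mul_le_mul_of_nonneg_left
            (le_trans (abs_le_abs (hMw s (hsub hs)) (by linarith [hw1 s (hsub hs)]))
              (le_of_eq (abs_of_nonneg hM0))) (abs_nonneg _)
        _ = M * |β s| := mul_comm _ _
    have hφint : IntegrableOn (fun s => C + C * (β s * w s)) (Icc 0 t) :=
      (integrableOn_const measure_Icc_lt_top.ne).add hβwint
    have key := intervalIntegral.sub_le_integral_of_hasDeriv_right_of_le (g := fun s => Real.log (1 + y s))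
      (g' := fun x => y' x / (1 + y x)) (φ := fun s => C + C * (β s * w s)) ht.1
      ((ContinuousOn.log (continuousOn_const.add (hycont.mono hsub))
        (fun s hs => (hy1 s (hsub hs)).ne')))
      (fun x hx => (HasDerivAt.log ((hd x (hsub (Ioo_subset_Icc_self hx))).const_add 1)
        (hy1 x (hsub (Ioo_subset_Icc_self hx))).ne').hasDerivWithinAt)
      hφint ?_
    · -- convert interval integral and conclude
      rw [intervalIntegral.integral_of_le ht.1] at key
      have hsplit : ∫ s in Ioc 0 t, (C + C * (β s * w s))
          = C * t + C * ∫ s in Ioc 0 t, b s * w s := by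
        rw [integral_add ((integrableOn_const (C := C) measure_Ioc_lt_top.ne))
          (hβwint.mono_set Ioc_subset_Icc_self)]
        congr 1
        · simp [Real.volume_Ioc, ENNReal.toReal_ofReal ht.1]; rw [max_eq_left ht.1]; ring
        · rw [integral_const_mul]
          congr 1
          refine integral_congr_ae ?_
          have : β =ᵐ[volume.restrict (Ioc 0 t)] b :=
            ae_restrict_of_ae_restrict_of_subset hsub' hbae.symm
          filter_upwards [this] with s hs
          rw [hs]
      rw [hsplit] at key
      have : w t - w 0 = Real.log (1 + y t) - Real.log (1 + y 0) := by simp [hw]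
      linarith [key, this]
    · -- the pointwise derivative bound
      intro x hx
      have hxI : x ∈ Icc (0:ℝ) T := hsub (Ioo_subset_Icc_self hx)
      have h1 : (0:ℝ) < 1 + y x := hy1 x hxI
      have h2 : 0 ≤ β x := hβnn x hxI
      have h3 : 0 ≤ Real.log (1 + y x) := Real.log_nonneg (by linarith [hynn x hxI])
      have h4 := hineq x hxI
      rw [div_le_iff₀ h1]
      show y' x ≤ (C + C * (β x * w x)) * (1 + y x)
      have h5 : 0 ≤ C * (1 + β x * (1 + Real.log (1 + y x))) := by
        have : 0 ≤ β x * (1 + Real.log (1 + y x)) := mul_nonneg h2 (by linarith)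
        nlinarith
      have h6 : C * (1 + β x * (1 + Real.log (1 + y x))) * y x
          ≤ C * (1 + β x * (1 + Real.log (1 + y x))) * (1 + y x) :=
        mul_le_mul_of_nonneg_left (by linarith) h5
      have h7 : (C + C * (β x * w x)) * (1 + y x)
          = C * (1 + β x * (1 + Real.log (1 + y x))) * (1 + y x) := by
        simp only [hw]; ring
      linarith
  have hkey : ∀ (k : ℕ) (x : ℝ), ∫ s in Ioc 0 x, b s * B s ^ k = B x ^ (k + 1) / (k + 1) :=
    fun k x => key_identity b hbmeas hbnn hbint k x
  -- the iteration
  have iter : ∀ (n : ℕ), ∀ t ∈ Icc (0:ℝ) T,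
      w t ≤ (w 0 + C * t) * (∑ k ∈ Finset.range n, (C * B t) ^ k / (k.factorial : ℝ))
        + M * ((C * B t) ^ n / (n.factorial : ℝ)) := by
    intro n
    induction n with
    | zero =>
      intro t ht
      simpa using hMw t ht
    | succ n ih =>
      intro t ht
      set A := w 0 + C * t with hA
      have hA0 : 0 ≤ A := by
        have := hw1 0 ⟨le_refl 0, hT.le⟩
        have := ht.1
        simp only [hA]; nlinarith
      have hsub' : Ioc (0:ℝ) t ⊆ Icc 0 T := (Ioc_subset_Ioc_right ht.2).trans Ioc_subset_Icc_self
      -- pointwise bound of the integrand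
      have hpt : ∀ s ∈ Ioc (0:ℝ) t, b s * w s
          ≤ (∑ k ∈ Finset.range n, (A * C ^ k / (k.factorial : ℝ)) * (b s * B s ^ k))
            + (M * C ^ n / (n.factorial : ℝ)) * (b s * B s ^ n) := by
        intro s hs
        have hsI : s ∈ Icc (0:ℝ) T := hsub' hs
        have h1 := ih s hsI
        have h2 : w 0 + C * s ≤ A := by
          simp only [hA]
          have : s ≤ t := hs.2
          nlinarith
        have hSnn : 0 ≤ ∑ k ∈ Finset.range n, (C * B s) ^ k / (k.factorial : ℝ) :=
          Finset.sum_nonneg fun k _ =>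
            div_nonneg (pow_nonneg (mul_nonneg hC.le (Bnn s)) _) (by positivity)
        have h3 : w s ≤ A * (∑ k ∈ Finset.range n, (C * B s) ^ k / (k.factorial : ℝ))
            + M * ((C * B s) ^ n / (n.factorial : ℝ)) := by
          refine h1.trans ?_
          have := mul_le_mul_of_nonneg_right h2 hSnn
          linarith
        have h4 := mul_le_mul_of_nonneg_left h3 (hbnn s)
        refine h4.trans (le_of_eq ?_)
        rw [mul_add, Finset.mul_sum, Finset.mul_sum]
        congr 1
        · refine Finset.sum_congr rfl fun k _ => ?_
          rw [mul_pow]; ring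
        · rw [mul_pow]; ring
      -- integrate the bound
      have hintR : IntegrableOn (fun s =>
          (∑ k ∈ Finset.range n, (A * C ^ k / (k.factorial : ℝ)) * (b s * B s ^ k))
            + (M * C ^ n / (n.factorial : ℝ)) * (b s * B s ^ n)) (Ioc 0 t) :=
        (integrable_finset_sum _ fun k _ => (fint k t).const_mul _).add ((fint n t).const_mul _)
      have hmono := setIntegral_mono_on (hbwint t ht) hintR measurableSet_Ioc hpt
      have hval : ∫ s in Ioc 0 t, ((∑ k ∈ Finset.range n,
            (A * C ^ k / (k.factorial : ℝ)) * (b s * B s ^ k))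
            + (M * C ^ n / (n.factorial : ℝ)) * (b s * B s ^ n))
          = (∑ k ∈ Finset.range n, (A * C ^ k / (k.factorial : ℝ)) * (B t ^ (k+1) / (k+1)))
            + (M * C ^ n / (n.factorial : ℝ)) * (B t ^ (n+1) / (n+1)) := by
        rw [integral_add (integrable_finset_sum _ fun k _ => (fint k t).const_mul _)
          ((fint n t).const_mul _), integral_finset_sum _ fun k _ => (fint k t).const_mul _,
          integral_const_mul, hkey n t]
        congr 1
        refine Finset.sum_congr rfl fun k _ => ?_
        rw [integral_const_mul, hkey k t]
      -- reassemble
      have hre : A + C * ((∑ k ∈ Finset.range n,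
            (A * C ^ k / (k.factorial : ℝ)) * (B t ^ (k+1) / (k+1)))
            + (M * C ^ n / (n.factorial : ℝ)) * (B t ^ (n+1) / (n+1)))
          = A * (∑ k ∈ Finset.range (n+1), (C * B t) ^ k / (k.factorial : ℝ))
            + M * ((C * B t) ^ (n+1) / ((n+1).factorial : ℝ)) := by
        have hterm : ∀ (D : ℝ) (k : ℕ),
            C * ((D * C ^ k / (k.factorial : ℝ)) * (B t ^ (k+1) / (k+1)))
            = D * ((C * B t) ^ (k+1) / ((k+1).factorial : ℝ)) := by
          intro D k
          rw [mul_pow, Nat.factorial_succ]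
          push_cast
          have hk : ((k.factorial : ℝ)) ≠ 0 := by positivity
          field_simp
          ring
        have e1 : C * ∑ k ∈ Finset.range n,
              (A * C ^ k / (k.factorial : ℝ)) * (B t ^ (k+1) / (k+1))
            = ∑ k ∈ Finset.range n, A * ((C * B t) ^ (k+1) / ((k+1).factorial : ℝ)) := by
          rw [Finset.mul_sum]
          exact Finset.sum_congr rfl fun k _ => hterm A k
        have e2 : A * ∑ k ∈ Finset.range (n+1), (C * B t) ^ k / (k.factorial : ℝ)
            = A + ∑ k ∈ Finset.range n, A * ((C * B t) ^ (k+1) / ((k+1).factorial : ℝ)) := by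
          rw [Finset.sum_range_succ', mul_add, Finset.mul_sum]
          simp [add_comm]
        rw [mul_add, e1, e2, hterm M n]
        ring
      calc w t ≤ A + C * ∫ s in Ioc 0 t, b s * w s := hstepC t ht
        _ ≤ A + C * ((∑ k ∈ Finset.range n, (A * C ^ k / (k.factorial : ℝ)) * (B t ^ (k+1) / (k+1)))
            + (M * C ^ n / (n.factorial : ℝ)) * (B t ^ (n+1) / (n+1))) := by
            rw [← hval]
            exact (add_le_add_iff_left A).2 (mul_le_mul_of_nonneg_left hmono hC.le)
        _ = _ := hre
  -- pass to the limit
  have wbound : ∀ t ∈ Icc (0:ℝ) T, w t ≤ (w 0 + C * t) * Real.exp (C * B t) := by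
    intro t ht
    have hA0 : 0 ≤ w 0 + C * t := by nlinarith [hw1 0 ⟨le_refl (0:ℝ), hT.le⟩, ht.1]
    have hx0 : 0 ≤ C * B t := mul_nonneg hC.le (Bnn t)
    have hbnd : ∀ n : ℕ, w t ≤ (w 0 + C * t) * Real.exp (C * B t)
        + M * ((C * B t) ^ n / (n.factorial : ℝ)) := by
      intro n
      refine (iter n t ht).trans ?_
      have h1 := Real.sum_le_exp_of_nonneg hx0 n
      have h2 := mul_le_mul_of_nonneg_left h1 hA0
      linarith
    have hlim : Filter.Tendsto (fun n : ℕ => (w 0 + C * t) * Real.exp (C * B t)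
        + M * ((C * B t) ^ n / (n.factorial : ℝ))) Filter.atTop
        (nhds ((w 0 + C * t) * Real.exp (C * B t) + M * 0)) :=
      Filter.Tendsto.const_add _
        ((FloorSemiring.tendsto_pow_div_factorial_atTop (C * B t)).const_mul M)
    have := ge_of_tendsto hlim (Filter.Eventually.of_forall hbnd)
    simpa using this
  -- conclusion
  intro t ht
  rw [hBeq t ht]
  have hy0 : (0:ℝ) ≤ y 0 := hynn 0 ⟨le_refl (0:ℝ), hT.le⟩
  have hb1 : (1:ℝ) ≤ 1 + y 0 := by linarith
  have hbase : 0 < (1 + y 0) * Real.exp (1 + C * t) := by positivity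
  rw [Real.rpow_def_of_pos hbase, Real.log_mul (by linarith) (Real.exp_ne_zero _),
    Real.log_exp]
  have h1 : 1 + y t = Real.exp (Real.log (1 + y t)) := (Real.exp_log (hy1 t ht)).symm
  rw [h1]
  apply Real.exp_le_exp.mpr
  have h2 := wbound t ht
  simp only [hw] at h2
  have hE1 : 0 < Real.exp (C * B t) := Real.exp_pos _
  have h3 : (1 + Real.log (1 + y 0) + C * t) * Real.exp (C * B t)
      = (Real.log (1 + y 0) + (1 + C * t)) * Real.exp (C * B t) := by ring
  nlinarith [h2, h3, hE1]
end
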